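/- arXiv:0912.1121 — 3 statements merged into one kernel-verified Lean document; each statement's English description precedes it below -/
import Mathlib

section
/- Let Γ ⊆ Δ and Λ be subspaces of Euclidean space ℝ^d with Δ and Λ nonzero, and let π denote the orthogonal projection of ℝ^d onto the orthogonal complement Γ^⊥ of Γ (π(Δ) and π(Λ), the images of Δ and Λ under π, realize the quotients Δ/Γ and Λ/Γ). If π(Δ) and π(Λ) are both nonzero, then the minimum angle between Δ and Λ is at most the minimum angle between π(Δ) and π(Λ): ∠(Δ,Λ) ≤ ∠(π(Δ), π(Λ)). -/
open Set

/-- The minimum angle between two subspaces of Euclidean space: the infimum of the angles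
between nonzero vectors of the two subspaces. -/
noncomputable def minAngle {d : ℕ} (V W : Submodule ℝ (EuclideanSpace ℝ (Fin d))) : ℝ :=
  sInf {θ : ℝ | ∃ u ∈ V, ∃ w ∈ W, u ≠ 0 ∧ w ≠ 0 ∧ θ = InnerProductGeometry.angle u w}

/-- The orthogonal projection of `ℝ^d` onto the orthogonal complement of `Γ`,
as a linear endomorphism of `ℝ^d`. -/
noncomputable def orthProjOnto {d : ℕ} (Γ : Submodule ℝ (EuclideanSpace ℝ (Fin d))) :
    EuclideanSpace ℝ (Fin d) →ₗ[ℝ] EuclideanSpace ℝ (Fin d) :=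
  (Γᗮ.subtype).comp (Γᗮ.orthogonalProjectionOnto).toLinearMap


lemma arccos_anti {x y : ℝ} (h : x ≤ y) : Real.arccos y ≤ Real.arccos x := by
  rw [Real.arccos_eq_pi_div_two_sub_arcsin, Real.arccos_eq_pi_div_two_sub_arcsin]
  have := Real.monotone_arcsin h
  linarith

set_option maxHeartbeats 800000 in
open InnerProductGeometry in
theorem aux_angle {d : ℕ} (a b g : EuclideanSpace ℝ (Fin d))
    (hag : inner ℝ a g = (0:ℝ)) (hbg : inner ℝ b g = (0:ℝ)) (ha : a ≠ 0) (hb : b ≠ 0) :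
    ∃ s t : ℝ, s • a + t • g ≠ 0 ∧
      angle (s • a + t • g) (b + g) ≤ angle a b := by
  classical
  have hgb : inner ℝ g b = (0:ℝ) := by rw [real_inner_comm]; exact hbg
  have hga : inner ℝ g a = (0:ℝ) := by rw [real_inner_comm]; exact hag
  set α : ℝ := inner ℝ a b with hα
  have hA : (0:ℝ) < ‖a‖ := norm_pos_iff.mpr ha
  have hB : (0:ℝ) < ‖b‖ := norm_pos_iff.mpr hb
  have hG : (0:ℝ) ≤ ‖g‖ := norm_nonneg g
  have hw2 : ‖b + g‖ ^ 2 = ‖b‖ ^ 2 + ‖g‖ ^ 2 := by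
    rw [norm_add_sq_real, hbg]; ring
  have hwne : b + g ≠ 0 := by
    intro h; rw [h, norm_zero] at hw2; nlinarith
  have hwpos : (0:ℝ) < ‖b + g‖ := norm_pos_iff.mpr hwne
  have hCS : α ^ 2 ≤ ‖a‖ ^ 2 * ‖b‖ ^ 2 := by
    have := abs_real_inner_le_norm a b
    rw [← hα] at this
    nlinarith [abs_nonneg α, le_abs_self α, neg_abs_le α]
  have hinner : ∀ s t : ℝ, inner ℝ (s • a + t • g) (b + g) = s * α + t * ‖g‖ ^ 2 := by
    intro s t
    simp only [inner_add_left, inner_add_right, real_inner_smul_left]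
    rw [hag, hgb, real_inner_self_eq_norm_sq]
    ring
  have hnorm2 : ∀ s t : ℝ, ‖s • a + t • g‖ ^ 2 = s ^ 2 * ‖a‖ ^ 2 + t ^ 2 * ‖g‖ ^ 2 := by
    intro s t
    rw [← real_inner_self_eq_norm_sq]
    simp only [inner_add_left, inner_add_right, real_inner_smul_left, real_inner_smul_right]
    rw [hag, hga, real_inner_self_eq_norm_sq, real_inner_self_eq_norm_sq]
    ring
  rcases le_or_gt α 0 with hα0 | hα0
  · rcases eq_or_ne g 0 with hg0 | hg0
    · refine ⟨1, 1, ?_, ?_⟩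
      · simpa [hg0] using ha
      · simp [hg0]
    · refine ⟨0, 1, ?_, ?_⟩
      · simpa using hg0
      · have hGpos : (0:ℝ) < ‖g‖ := norm_pos_iff.mpr hg0
        unfold angle
        apply arccos_anti
        have h1 : inner ℝ ((0:ℝ) • a + (1:ℝ) • g) (b + g) = ‖g‖ ^ 2 := by
          rw [hinner]; ring
        have h2 : ‖(0:ℝ) • a + (1:ℝ) • g‖ = ‖g‖ := by simp
        rw [h1, h2, ← hα, div_le_div_iff₀ (by positivity) (by positivity)]
        nlinarith [mul_pos hA hB, mul_nonneg hG hwpos.le,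
          mul_nonneg (sq_nonneg ‖g‖) (mul_pos hA hB).le]
  · refine ⟨‖b‖ ^ 2, α, ?_, ?_⟩
    · intro h
      have h2 := hnorm2 (‖b‖ ^ 2) α
      rw [h, norm_zero] at h2
      nlinarith [mul_pos (mul_pos (pow_pos hB 2) (pow_pos hB 2)) (pow_pos hA 2),
        mul_nonneg (sq_nonneg α) (sq_nonneg ‖g‖)]
    · have hx2 : ‖(‖b‖ ^ 2) • a + α • g‖ ^ 2 = ‖b‖ ^ 4 * ‖a‖ ^ 2 + α ^ 2 * ‖g‖ ^ 2 := by
        rw [hnorm2]; ring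
      have hxpos : (0:ℝ) < ‖(‖b‖ ^ 2) • a + α • g‖ := by
        have h3 : (0:ℝ) < ‖(‖b‖ ^ 2) • a + α • g‖ ^ 2 := by
          rw [hx2]
          nlinarith [mul_pos (pow_pos hB 4) (pow_pos hA 2),
            mul_nonneg (sq_nonneg α) (sq_nonneg ‖g‖)]
        nlinarith [norm_nonneg ((‖b‖ ^ 2) • a + α • g)]
      unfold angle
      apply arccos_anti
      rw [← hα, div_le_div_iff₀ (by positivity) (by positivity), hinner]
      have key : ‖(‖b‖ ^ 2) • a + α • g‖ * ‖b + g‖ ≤ ‖a‖ * ‖b‖ * (‖b‖ ^ 2 + ‖g‖ ^ 2) := by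
        have h4 : (0:ℝ) ≤ (‖b‖ ^ 2 + ‖g‖ ^ 2) * (‖g‖ ^ 2 * (‖a‖ ^ 2 * ‖b‖ ^ 2 - α ^ 2)) :=
          mul_nonneg (by positivity) (mul_nonneg (sq_nonneg _) (by linarith))
        have hsq : (‖(‖b‖ ^ 2) • a + α • g‖ * ‖b + g‖) ^ 2 ≤
            (‖a‖ * ‖b‖ * (‖b‖ ^ 2 + ‖g‖ ^ 2)) ^ 2 := by
          rw [mul_pow, hx2, hw2]
          nlinarith [h4]
        nlinarith [mul_nonneg hxpos.le hwpos.le,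
          mul_pos (mul_pos hA hB) (by positivity : (0:ℝ) < ‖b‖ ^ 2 + ‖g‖ ^ 2)]
      have h5 := mul_le_mul_of_nonneg_left key hα0.le
      nlinarith [h5]

theorem minAngle_le_minAngle_of_orthProj {d : ℕ}
    (Γ Δ Λ : Submodule ℝ (EuclideanSpace ℝ (Fin d)))
    (hΓΔ : Γ ≤ Δ) (hΔ : Δ ≠ ⊥) (hΛ : Λ ≠ ⊥)
    (hπΔ : Δ.map (orthProjOnto Γ) ≠ ⊥) (hπΛ : Λ.map (orthProjOnto Γ) ≠ ⊥) :
    minAngle Δ Λ ≤ minAngle (Δ.map (orthProjOnto Γ)) (Λ.map (orthProjOnto Γ)) := by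
  classical
  have hπmem : ∀ z, orthProjOnto Γ z ∈ Γᗮ := fun z => SetLike.coe_mem _
  have hsub : ∀ z, z - orthProjOnto Γ z ∈ Γ := by
    intro z
    have h := Submodule.sub_starProjection_mem_orthogonal (K := Γᗮ) z
    rwa [Submodule.orthogonal_orthogonal] at h
  have hbdd : BddBelow {θ : ℝ | ∃ u ∈ Δ, ∃ w ∈ Λ, u ≠ 0 ∧ w ≠ 0 ∧
      θ = InnerProductGeometry.angle u w} := by
    refine ⟨0, ?_⟩
    rintro θ ⟨u, _, w, _, _, _, rfl⟩
    exact InnerProductGeometry.angle_nonneg u w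
  obtain ⟨u₀, hu₀, hu₀0⟩ := Submodule.exists_mem_ne_zero_of_ne_bot hπΔ
  obtain ⟨w₀, hw₀, hw₀0⟩ := Submodule.exists_mem_ne_zero_of_ne_bot hπΛ
  have hTne : {θ : ℝ | ∃ u ∈ Δ.map (orthProjOnto Γ), ∃ w ∈ Λ.map (orthProjOnto Γ),
      u ≠ 0 ∧ w ≠ 0 ∧ θ = InnerProductGeometry.angle u w}.Nonempty :=
    ⟨_, u₀, hu₀, w₀, hw₀, hu₀0, hw₀0, rfl⟩
  unfold minAngle
  apply le_csInf hTne
  rintro θ ⟨u', hu', w', hw', hu'0, hw'0, rfl⟩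
  obtain ⟨u, huΔ, rfl⟩ := Submodule.mem_map.mp hu'
  obtain ⟨w, hwΛ, rfl⟩ := Submodule.mem_map.mp hw'
  set a := orthProjOnto Γ u with hadef
  set b := orthProjOnto Γ w with hbdef
  set g := w - b with hgdef
  have hgΓ : g ∈ Γ := hsub w
  have hag : inner ℝ a g = (0:ℝ) := by
    rw [real_inner_comm]
    exact (Submodule.mem_orthogonal Γ a).mp (hπmem u) g hgΓ
  have hbg : inner ℝ b g = (0:ℝ) := by
    rw [real_inner_comm]
    exact (Submodule.mem_orthogonal Γ b).mp (hπmem w) g hgΓ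
  obtain ⟨s, t, hx0, hle⟩ := aux_angle a b g hag hbg hu'0 hw'0
  have hbgw : b + g = w := by rw [hgdef]; abel
  rw [hbgw] at hle
  have haΔ : a ∈ Δ := by
    have : u - (u - a) = a := by abel
    rw [← this]
    exact Submodule.sub_mem _ huΔ (hΓΔ (hsub u))
  have hgΔ : g ∈ Δ := hΓΔ hgΓ
  have hxΔ : s • a + t • g ∈ Δ :=
    Submodule.add_mem _ (Submodule.smul_mem _ _ haΔ) (Submodule.smul_mem _ _ hgΔ)
  have hw0 : w ≠ 0 := by
    intro h
    apply hw'0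
    rw [hbdef, h, map_zero]
  refine le_trans (csInf_le hbdd ⟨s • a + t • g, hxΔ, w, hwΛ, hx0, hw0, rfl⟩) hle
end

section
/- For every real ε > 0 there exists an integer N(ε) ≥ 1 such that for every integer p ≥ N(ε) and every finite sequence A_1, …, A_p of matrices in SL(2,ℝ), there exists a sequence of angles α_1, …, α_p in the open interval (−ε, ε) such that, setting B_i = R_{α_i}·A_i (the composition of A_i with the rotation R_{α_i} of angle α_i), the product matrix B_p·B_{p−1}⋯B_1 has only real eigenvalues. -/
open Matrix Set

/-- The rotation matrix of angle `α`. -/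
noncomputable def rotMat (α : ℝ) : Matrix (Fin 2) (Fin 2) ℝ :=
  !![Real.cos α, -Real.sin α; Real.sin α, Real.cos α]

/-- The multiset of complex eigenvalues (with multiplicity) of a real square matrix:
the roots in `ℂ` of its characteristic polynomial. -/
noncomputable def specC {n : Type*} [Fintype n] [DecidableEq n] (M : Matrix n n ℝ) :
    Multiset ℂ :=
  ((M.map (algebraMap ℝ ℂ)).charpoly).roots

/-- The product `A_{p-1} ⬝ A_{p-2} ⬝ ⋯ ⬝ A_0` of a finite sequence of square matrices. -/
noncomputable def seqProd' {n : Type*} [Fintype n] [DecidableEq n] {p : ℕ}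
    (A : Fin p → Matrix n n ℝ) : Matrix n n ℝ :=
  (List.ofFn A).reverse.prod

/-! ### Auxiliary definitions -/

/-- The antisymmetric part `M 1 0 - M 0 1`, whose sign records the rotation direction. -/
noncomputable def sF (M : Matrix (Fin 2) (Fin 2) ℝ) : ℝ := M 1 0 - M 0 1

/-- Signed rotation angle of an elliptic `SL(2,ℝ)` matrix. -/
noncomputable def thetaM (M : Matrix (Fin 2) (Fin 2) ℝ) : ℝ :=
  if 0 < sF M then Real.arccos (M.trace / 2) else - Real.arccos (M.trace / 2)

/-- Recursive product `B (n-1) * ⋯ * B 0`. -/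
noncomputable def recProd (B : ℕ → Matrix (Fin 2) (Fin 2) ℝ) : ℕ → Matrix (Fin 2) (Fin 2) ℝ
  | 0 => 1
  | n+1 => B n * recProd B n

/-! ### Spectral lemmas for 2×2 real matrices -/

lemma charpoly_eval_BC (M : Matrix (Fin 2) (Fin 2) ℂ) (z : ℂ) :
    M.charpoly.eval z = z^2 - M.trace * z + M.det := by
  rw [Matrix.charpoly, Matrix.det_fin_two, Matrix.trace_fin_two, Matrix.det_fin_two]
  simp [charmatrix_apply, Matrix.one_apply]
  ring

lemma det_mapC_BC (M : Matrix (Fin 2) (Fin 2) ℝ) :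
    (M.map (algebraMap ℝ ℂ)).det = (M.det : ℂ) := by
  rw [show M.map (algebraMap ℝ ℂ) = (algebraMap ℝ ℂ).mapMatrix M from rfl, ← RingHom.map_det]
  rfl

lemma trace_mapC_BC (M : Matrix (Fin 2) (Fin 2) ℝ) :
    (M.map (algebraMap ℝ ℂ)).trace = (M.trace : ℂ) := by
  simp [Matrix.trace, Matrix.map_apply]

lemma root_eq_BC (M : Matrix (Fin 2) (Fin 2) ℝ) (z : ℂ) (hz : z ∈ specC M) :
    z^2 - (M.trace : ℂ) * z + (M.det : ℂ) = 0 := by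
  rw [specC, Polynomial.mem_roots ((M.map (algebraMap ℝ ℂ)).charpoly_monic.ne_zero)] at hz
  have := hz
  rw [Polynomial.IsRoot, charpoly_eval_BC, det_mapC_BC, trace_mapC_BC] at this
  exact this

lemma root_parts_BC (M : Matrix (Fin 2) (Fin 2) ℝ) (hdet : M.det = 1) (z : ℂ)
    (hz : z ∈ specC M) :
    z.im * (2*z.re - M.trace) = 0 ∧ z.re^2 - z.im^2 - M.trace*z.re + 1 = 0 := by
  have h := root_eq_BC M z hz
  rw [hdet] at h
  constructor
  · have h1 : z.re * z.im + z.im * z.re - M.trace * z.im = 0 := by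
      have := congrArg Complex.im h
      simpa [Complex.add_im, Complex.sub_im, Complex.mul_im, pow_two] using this
    linear_combination h1
  · have := congrArg Complex.re h
    simpa [Complex.add_re, Complex.sub_re, Complex.mul_re, pow_two] using this

lemma im_eq_zero_BC (M : Matrix (Fin 2) (Fin 2) ℝ) (hdet : M.det = 1)
    (htr : 4 ≤ M.trace^2) : ∀ z ∈ specC M, z.im = 0 := by
  intro z hz
  obtain ⟨him, hre⟩ := root_parts_BC M hdet z hz
  by_contra hy
  have h2 : 2*z.re = M.trace := by
    rcases mul_eq_zero.1 him with h' | h'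
    · exact absurd h' hy
    · linarith
  have h3 : 0 < z.im^2 := by positivity
  nlinarith

lemma tr_sq_lt_BC (M : Matrix (Fin 2) (Fin 2) ℝ) (hdet : M.det = 1)
    (h : ∃ z ∈ specC M, z.im ≠ 0) : M.trace^2 < 4 := by
  obtain ⟨z, hz, hy⟩ := h
  obtain ⟨him, hre⟩ := root_parts_BC M hdet z hz
  have h2 : 2*z.re = M.trace := by
    rcases mul_eq_zero.1 him with h' | h'
    · exact absurd h' hy
    · linarith
  have h3 : 0 < z.im^2 := by positivity
  nlinarith

/-! ### Rotation matrix entry lemmas -/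

lemma rotMat_zero : rotMat 0 = 1 := by
  ext i j; fin_cases i <;> fin_cases j <;> simp [rotMat, Matrix.one_apply]

lemma det_rotMat (t : ℝ) : (rotMat t).det = 1 := by
  simp [rotMat, Matrix.det_fin_two_of]
  nlinarith [Real.sin_sq_add_cos_sq t]

lemma mul_entry_BC (M N : Matrix (Fin 2) (Fin 2) ℝ) (i j : Fin 2) :
    (M * N) i j = M i 0 * N 0 j + M i 1 * N 1 j := by
  rw [Matrix.mul_apply, Fin.sum_univ_two]

lemma rotMat_apply_BC (t : ℝ) : rotMat t 0 0 = Real.cos t ∧ rotMat t 0 1 = -Real.sin t ∧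
    rotMat t 1 0 = Real.sin t ∧ rotMat t 1 1 = Real.cos t := by
  refine ⟨?_, ?_, ?_, ?_⟩ <;> simp [rotMat]

lemma trace_rot_mul (t : ℝ) (M : Matrix (Fin 2) (Fin 2) ℝ) :
    (rotMat t * M).trace = Real.cos t * M.trace - Real.sin t * sF M := by
  obtain ⟨h1, h2, h3, h4⟩ := rotMat_apply_BC t
  rw [Matrix.trace_fin_two, Matrix.trace_fin_two, sF, mul_entry_BC, mul_entry_BC, h1, h2, h3, h4]
  ring

lemma sF_rot_mul (t : ℝ) (M : Matrix (Fin 2) (Fin 2) ℝ) :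
    sF (rotMat t * M) = Real.sin t * M.trace + Real.cos t * sF M := by
  obtain ⟨h1, h2, h3, h4⟩ := rotMat_apply_BC t
  rw [sF, Matrix.trace_fin_two, sF, mul_entry_BC, mul_entry_BC, h1, h2, h3, h4]
  ring

/-! ### The conjugation sign lemma -/

set_option maxHeartbeats 1000000 in
lemma arith_core_BC (a b c d p q u v : ℝ) (hP : p*v - q*u = 1) (hX : a*d - b*c = 1)
    (hT : (a+d)^2 < 4) :
    0 < ((a-d)*(u*v + p*q) + c*(v^2+q^2) - b*(u^2+p^2)) * (c - b) := by
  set K := u*v + p*q with hK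
  set S1 := v^2 + q^2 with hS1
  set S2 := u^2 + p^2 with hS2
  have hSS : S1 * S2 = K^2 + 1 := by rw [hS1, hS2, hK]; nlinarith [hP]
  have hbc : 4*(b*c) < -(a-d)^2 := by nlinarith
  have hbc0 : b*c < 0 := by nlinarith [sq_nonneg (a-d)]
  have hcb2 : 0 < (c-b)^2 := by nlinarith [sq_nonneg (c-b), sq_nonneg (c+b)]
  have hx : 0 < c*(c-b) := by nlinarith [sq_nonneg c]
  have hy : 0 < (-b)*(c-b) := by nlinarith [sq_nonneg b]
  have h1 : 0 < S1 := by
    nlinarith [sq_nonneg K, hSS, sq_nonneg u, sq_nonneg p, sq_nonneg v, sq_nonneg q]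
  have h2 : 0 < S2 := by
    nlinarith [sq_nonneg K, hSS, sq_nonneg u, sq_nonneg p, sq_nonneg v, sq_nonneg q]
  set L := c*(c-b)*S1 + (-b)*(c-b)*S2 with hL
  set E := (a-d)*K*(c-b) with hE
  have hLpos : 0 < L := by positivity
  have hamgm : 4*(c*(c-b))*((-b)*(c-b))*(S1*S2) ≤ L^2 := by
    nlinarith [sq_nonneg (c*(c-b)*S1 - (-b)*(c-b)*S2)]
  have h4 : (a-d)^2*(c-b)^2 < 4*(c*(c-b))*((-b)*(c-b)) := by nlinarith [hbc, hcb2]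
  have h5 : E^2 = (a-d)^2*(c-b)^2*K^2 := by rw [hE]; ring
  have h6 : E^2 ≤ 4*(c*(c-b))*((-b)*(c-b))*K^2 := by
    rw [h5]; exact mul_le_mul_of_nonneg_right h4.le (sq_nonneg K)
  have h7 : 0 < 4*(c*(c-b))*((-b)*(c-b)) := by positivity
  have hxy : E^2 < 4*(c*(c-b))*((-b)*(c-b))*(S1*S2) := by
    rw [hSS]; nlinarith [h6, h7]
  have hL2 : E^2 < L^2 := lt_of_lt_of_le hxy hamgm
  have final : 0 < L + E := by nlinarith [hL2, hLpos]
  have heq : ((a-d)*K + c*S1 - b*S2) * (c - b) = L + E := by rw [hL, hE]; ring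
  linarith [heq ▸ final]

lemma sF_conj_pos {P X Y : Matrix (Fin 2) (Fin 2) ℝ} (hP : P.det = 1) (hX : X.det = 1)
    (hT : X.trace^2 < 4) (hYP : Y * P = P * X) : 0 < sF Y * sF X := by
  have hY : Y = P * X * P.adjugate := by
    calc Y = Y * (P * P.adjugate) := by rw [Matrix.mul_adjugate, hP]; simp
    _ = (Y * P) * P.adjugate := by rw [Matrix.mul_assoc]
    _ = P * X * P.adjugate := by rw [hYP]
  have hadj : P.adjugate = !![P 1 1, -(P 0 1); -(P 1 0), P 0 0] := Matrix.adjugate_fin_two P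
  have hsY : sF Y = (X 0 0 - X 1 1) * (P 1 0 * P 1 1 + P 0 0 * P 0 1)
      + X 1 0 * (P 1 1^2 + P 0 1^2) - X 0 1 * (P 1 0^2 + P 0 0^2) := by
    rw [hY, hadj, sF, mul_entry_BC, mul_entry_BC, mul_entry_BC, mul_entry_BC, mul_entry_BC,
      mul_entry_BC]
    simp
    ring
  rw [Matrix.det_fin_two] at hP hX
  rw [Matrix.trace_fin_two] at hT
  rw [hsY, sF]
  exact arith_core_BC (X 0 0) (X 0 1) (X 1 0) (X 1 1) (P 0 0) (P 0 1) (P 1 0) (P 1 1)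
    (by linarith) (by linarith) hT

/-! ### The angle-gain lemma -/

lemma thetaM_mem_BC (M : Matrix (Fin 2) (Fin 2) ℝ) : thetaM M ∈ Icc (-Real.pi) Real.pi := by
  have h1 := Real.arccos_nonneg (M.trace / 2)
  have h2 := Real.arccos_le_pi (M.trace / 2)
  unfold thetaM
  split <;> constructor <;> linarith

set_option maxHeartbeats 1000000 in
lemma arccos_gain_BC {T0 s0 Δ : ℝ} (hΔ : 0 ≤ Δ) (hr4 : 4 ≤ T0^2 + s0^2) {σ : ℝ}
    (hσcases : σ = 1 ∨ σ = -1)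
    (hf2 : ∀ t ∈ Icc (0:ℝ) Δ, (Real.cos t * T0 - Real.sin t * s0)^2 < 4)
    (hσ : ∀ t ∈ Icc (0:ℝ) Δ, 0 < σ * (Real.sin t * T0 + Real.cos t * s0)) :
    σ * Real.arccos ((Real.cos 0 * T0 - Real.sin 0 * s0) / 2) + Δ ≤
      σ * Real.arccos ((Real.cos Δ * T0 - Real.sin Δ * s0) / 2) := by
  set f : ℝ → ℝ := fun t => Real.cos t * T0 - Real.sin t * s0 with hf
  set g : ℝ → ℝ := fun t => Real.sin t * T0 + Real.cos t * s0 with hg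
  clear_value f g
  have hf2' : ∀ t ∈ Icc (0:ℝ) Δ, (f t)^2 < 4 := by
    intro t ht; simp only [hf]; exact hf2 t ht
  have hσ' : ∀ t ∈ Icc (0:ℝ) Δ, 0 < σ * g t := by
    intro t ht; simp only [hg]; exact hσ t ht
  have hcf : Continuous f := by rw [hf]; continuity
  have hfg : ∀ t, (f t)^2 + (g t)^2 = T0^2 + s0^2 := by
    intro t
    simp only [hf, hg]
    nlinarith [Real.sin_sq_add_cos_sq t]
  set h : ℝ → ℝ := fun t => σ * Real.arccos (f t / 2) - t with hh
  have hderAll : ∀ x ∈ Ioo (0:ℝ) Δ,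
      HasDerivAt h (σ * (g x / (2 * Real.sqrt (1 - (f x / 2)^2))) - 1) x := by
    intro x hx
    have hx' : x ∈ Icc (0:ℝ) Δ := Ioo_subset_Icc_self hx
    have hfx := hf2' x hx'
    have hpos : 0 < 1 - (f x / 2)^2 := by nlinarith
    have hne1 : f x / 2 ≠ -1 := by intro hc; rw [hc] at hpos; norm_num at hpos
    have hne2 : f x / 2 ≠ 1 := by intro hc; rw [hc] at hpos; norm_num at hpos
    have hf' : HasDerivAt f (-(g x)) x := by
      have h1 : HasDerivAt (fun t => Real.cos t * T0) (-Real.sin x * T0) x :=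
        (Real.hasDerivAt_cos x).mul_const T0
      have h2 : HasDerivAt (fun t => Real.sin t * s0) (Real.cos x * s0) x :=
        (Real.hasDerivAt_sin x).mul_const s0
      have h3 := h1.sub h2
      have he : -Real.sin x * T0 - Real.cos x * s0 = -(g x) := by simp only [hg]; ring
      rw [he] at h3
      rw [hf]
      exact h3
    have harc := Real.hasDerivAt_arccos hne1 hne2
    have hcomp := harc.comp x (hf'.div_const 2)
    have h4 := (hcomp.const_mul σ).sub (hasDerivAt_id x)
    set s := Real.sqrt (1 - (f x / 2)^2) with hsdef
    have hsp : 0 < s := Real.sqrt_pos.2 hpos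
    have he2 : σ * (-(1 / s) * (-(g x) / 2)) - 1 = σ * (g x / (2 * s)) - 1 := by
      field_simp
    rw [he2] at h4
    exact h4
  have hmono : MonotoneOn h (Icc 0 Δ) := by
    apply monotoneOn_of_deriv_nonneg (convex_Icc 0 Δ)
    · apply Continuous.continuousOn
      rw [hh]
      exact (continuous_const.mul (Real.continuous_arccos.comp (hcf.div_const 2))).sub
        continuous_id
    · intro x hx
      rw [interior_Icc] at hx
      exact (hderAll x hx).differentiableAt.differentiableWithinAt
    · intro x hx
      rw [interior_Icc] at hx
      have hx' : x ∈ Icc (0:ℝ) Δ := Ioo_subset_Icc_self hx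
      rw [(hderAll x hx).deriv]
      have hfx := hf2' x hx'
      have hpos : 0 < 1 - (f x / 2)^2 := by nlinarith
      set s := Real.sqrt (1 - (f x / 2)^2) with hs
      have hspos : 0 < s := Real.sqrt_pos.2 hpos
      have hs2 : s^2 = 1 - (f x / 2)^2 := Real.sq_sqrt hpos.le
      have hσg : 0 < σ * g x := hσ' x hx'
      have hσg2 : (σ * g x)^2 = (g x)^2 := by
        rcases hσcases with h | h <;> rw [h] <;> ring
      have hgge : 2 * s ≤ σ * g x := by
        have h4 : 4*s^2 ≤ (σ * g x)^2 := by
          rw [hσg2, hs2]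
          nlinarith [hfg x, hr4]
        nlinarith [sq_nonneg (σ * g x - 2*s)]
      have he3 : σ * (g x / (2 * s)) - 1 = (σ * g x) / (2*s) - 1 := by ring
      rw [he3, sub_nonneg, le_div_iff₀ (by positivity)]
      linarith
  have key := hmono (left_mem_Icc.2 hΔ) (right_mem_Icc.2 hΔ) hΔ
  simp only [hh, hf] at key
  linarith

/-! ### The segment lemma -/

set_option maxHeartbeats 1000000 in
lemma segmentBC {C D : Matrix (Fin 2) (Fin 2) ℝ} (hC : C.det = 1) (hD : D.det = 1) {Δ : ℝ}
    (hΔ : 0 ≤ Δ)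
    (Hell : ∀ t ∈ Icc (0:ℝ) Δ, ((C * rotMat t * D).trace)^2 < 4) :
    thetaM (C * rotMat 0 * D) + Δ ≤ thetaM (C * rotMat Δ * D) := by
  set M := D * C with hM
  have hdM : M.det = 1 := by rw [hM, Matrix.det_mul, hD, hC, one_mul]
  set T0 := M.trace with hT0
  set s0 := sF M with hs0
  have hr4 : 4 ≤ T0^2 + s0^2 := by
    rw [hT0, hs0, Matrix.trace_fin_two, sF]
    rw [Matrix.det_fin_two] at hdM
    nlinarith [sq_nonneg (M 0 0 - M 1 1), sq_nonneg (M 0 1 + M 1 0)]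
  set f : ℝ → ℝ := fun t => Real.cos t * T0 - Real.sin t * s0 with hf
  set g : ℝ → ℝ := fun t => Real.sin t * T0 + Real.cos t * s0 with hg
  clear_value f g
  have hcg : Continuous g := by rw [hg]; continuity
  have hXdet : ∀ t, (rotMat t * M).det = 1 := by
    intro t; rw [Matrix.det_mul, det_rotMat, hdM, one_mul]
  have hXtr : ∀ t, (rotMat t * M).trace = f t := by
    intro t; simp only [hf]; rw [hT0, hs0]; exact trace_rot_mul t M
  have hXsF : ∀ t, sF (rotMat t * M) = g t := by
    intro t; simp only [hg]; rw [hT0, hs0]; exact sF_rot_mul t M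
  have htr : ∀ t, (C * rotMat t * D).trace = f t := by
    intro t
    rw [Matrix.mul_assoc, Matrix.trace_mul_comm, Matrix.mul_assoc, ← hM]
    exact hXtr t
  have hYP : ∀ t, (C * rotMat t * D) * C = C * (rotMat t * M) := by
    intro t; rw [hM]; noncomm_ring
  have hfg : ∀ t, (f t)^2 + (g t)^2 = T0^2 + s0^2 := by
    intro t
    simp only [hf, hg]
    nlinarith [Real.sin_sq_add_cos_sq t]
  have hf2 : ∀ t ∈ Icc (0:ℝ) Δ, (f t)^2 < 4 := by
    intro t ht; rw [← htr t]; exact Hell t ht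
  have hg2 : ∀ t ∈ Icc (0:ℝ) Δ, 0 < (g t)^2 := by
    intro t ht
    have h1 := hfg t
    have h2 := hf2 t ht
    nlinarith
  have hgsign : ∀ t ∈ Icc (0:ℝ) Δ, 0 < sF (C * rotMat t * D) * g t := by
    intro t ht
    have := sF_conj_pos hC (hXdet t) (by rw [hXtr t]; exact hf2 t ht) (hYP t)
    rwa [hXsF t] at this
  have hg0 : g 0 ≠ 0 := by
    intro h
    have := hg2 0 (left_mem_Icc.2 hΔ)
    rw [h] at this; simp at this
  set σ : ℝ := if 0 < g 0 then 1 else -1 with hσdef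
  have hσ : ∀ t ∈ Icc (0:ℝ) Δ, 0 < σ * g t := by
    intro t ht
    have hgt : g t ≠ 0 := by
      intro h
      have := hg2 t ht
      rw [h] at this; simp at this
    rcases lt_or_gt_of_ne hg0 with h0 | h0
    · rw [hσdef, if_neg (by linarith)]
      rcases lt_or_gt_of_ne hgt with h1 | h1
      · linarith
      · exfalso
        have hsub : Icc (0:ℝ) t ⊆ Icc 0 Δ := Icc_subset_Icc le_rfl ht.2
        obtain ⟨c, hc, hgc⟩ := intermediate_value_Icc ht.1 (hcg.continuousOn)
          (⟨le_of_lt h0, le_of_lt h1⟩ : (0:ℝ) ∈ Icc (g 0) (g t))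
        have := hg2 c (hsub hc)
        rw [hgc] at this; simp at this
    · rw [hσdef, if_pos h0]
      rcases lt_or_gt_of_ne hgt with h1 | h1
      · exfalso
        have hsub : Icc (0:ℝ) t ⊆ Icc 0 Δ := Icc_subset_Icc le_rfl ht.2
        obtain ⟨c, hc, hgc⟩ := intermediate_value_Icc' ht.1 (hcg.continuousOn)
          (⟨le_of_lt h1, le_of_lt h0⟩ : (0:ℝ) ∈ Icc (g t) (g 0))
        have := hg2 c (hsub hc)
        rw [hgc] at this; simp at this
      · linarith
  have hσcases : σ = 1 ∨ σ = -1 := by rw [hσdef]; split <;> simp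
  have htheta : ∀ t ∈ Icc (0:ℝ) Δ, thetaM (C * rotMat t * D) = σ * Real.arccos (f t / 2) := by
    intro t ht
    have hsg := hgsign t ht
    have hsσ := hσ t ht
    unfold thetaM
    rw [htr t]
    rcases hσcases with h | h
    · rw [h, one_mul]
      rw [h, one_mul] at hsσ
      have : 0 < sF (C * rotMat t * D) := by
        rcases (mul_pos_iff.1 hsg) with ⟨h1, _⟩ | ⟨_, h2⟩
        · exact h1
        · linarith
      rw [if_pos this]
    · rw [h] at hsσ ⊢
      have hgneg : g t < 0 := by nlinarith
      have : sF (C * rotMat t * D) < 0 := by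
        rcases (mul_pos_iff.1 hsg) with ⟨_, h2⟩ | ⟨h1, _⟩
        · linarith
        · exact h1
      rw [if_neg (by linarith)]
      ring
  have key := arccos_gain_BC hΔ hr4 hσcases (fun t ht => by simpa only [hf] using hf2 t ht)
    (fun t ht => by simpa only [hg] using hσ t ht)
  rw [htheta 0 (left_mem_Icc.2 hΔ), htheta Δ (right_mem_Icc.2 hΔ)]
  simp only [hf]
  linarith

/-! ### Product bookkeeping -/

lemma seqProd'_eq_recProd {p : ℕ} (B : ℕ → Matrix (Fin 2) (Fin 2) ℝ) :
    seqProd' (fun i : Fin p => B i) = recProd B p := by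
  induction p with
  | zero => simp [seqProd', recProd]
  | succ n ih =>
    rw [seqProd', List.ofFn_succ', List.concat_eq_append, List.reverse_append,
      List.reverse_singleton, List.singleton_append, List.prod_cons]
    rw [recProd, ← ih, seqProd']
    rfl

lemma recProd_congr {B B' : ℕ → Matrix (Fin 2) (Fin 2) ℝ} {n : ℕ}
    (h : ∀ i < n, B i = B' i) : recProd B n = recProd B' n := by
  induction n with
  | zero => rfl
  | succ m ih =>
    rw [recProd, recProd, h m (by omega), ih (fun i hi => h i (by omega))]

lemma recProd_det {B : ℕ → Matrix (Fin 2) (Fin 2) ℝ} (h : ∀ i, (B i).det = 1) (n : ℕ) :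
    (recProd B n).det = 1 := by
  induction n with
  | zero => simp [recProd]
  | succ m ih => rw [recProd, Matrix.det_mul, h m, ih, one_mul]

/-! ### Main theorem -/

theorem bonatti_crovisier_rotations :
    ∀ ε : ℝ, 0 < ε → ∃ N : ℕ, 1 ≤ N ∧ ∀ p : ℕ, N ≤ p →
      ∀ A : Fin p → Matrix.SpecialLinearGroup (Fin 2) ℝ,
      ∃ α : Fin p → ℝ,
        (∀ i, α i ∈ Ioo (-ε) ε) ∧
        ∀ z ∈ specC (seqProd'
          (fun i => rotMat (α i) * (A i : Matrix (Fin 2) (Fin 2) ℝ))), z.im = 0 := by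
  intro ε hε
  set ε' : ℝ := ε / 2 with hε'def
  have hε'pos : 0 < ε' := by positivity
  have hε'lt : ε' < ε := by rw [hε'def]; linarith
  refine ⟨⌈2 * Real.pi / ε'⌉₊ + 1, by omega, ?_⟩
  intro p hp A
  by_contra hcon
  push_neg at hcon
  -- setup
  set A' : ℕ → Matrix (Fin 2) (Fin 2) ℝ :=
    fun n => if h : n < p then (A ⟨n, h⟩ : Matrix (Fin 2) (Fin 2) ℝ) else 1 with hA'
  have hA'det : ∀ n, (A' n).det = 1 := by
    intro n
    rw [hA']
    simp only
    by_cases h : n < p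
    · rw [dif_pos h]; exact (A ⟨n, h⟩).prop
    · rw [dif_neg h]; simp
  set αf : ℕ → ℝ → ℕ → ℝ :=
    fun k t n => if n < k then ε' else if n = k then t else 0 with hαf
  set Bf : ℕ → ℝ → ℕ → Matrix (Fin 2) (Fin 2) ℝ :=
    fun k t n => rotMat (αf k t n) * A' n with hBf
  have hBdet : ∀ k t n, (Bf k t n).det = 1 := by
    intro k t n
    rw [hBf]
    simp only
    rw [Matrix.det_mul, det_rotMat, hA'det, one_mul]
  -- the assumption gives ellipticity of every perturbed product
  have Hell : ∀ k t, 0 ≤ t → t ≤ ε' → ((recProd (Bf k t) p).trace)^2 < 4 := by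
    intro k t ht0 ht1
    have hmem : ∀ i : Fin p, αf k t i ∈ Ioo (-ε) ε := by
      intro i
      rw [hαf]
      simp only
      constructor
      · split
        · linarith
        · split <;> linarith
      · split
        · linarith
        · split <;> linarith
    have heq : (fun i : Fin p => rotMat ((fun i : Fin p => αf k t ↑i) i) *
        (A i : Matrix (Fin 2) (Fin 2) ℝ)) = fun i : Fin p => Bf k t ↑i := by
      funext i
      rw [hBf, hA']
      simp only [dif_pos i.isLt]
    have hP := hcon (fun i : Fin p => αf k t ↑i) hmem
    rw [heq, seqProd'_eq_recProd] at hP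
    exact tr_sq_lt_BC _ (recProd_det (hBdet k t) p) hP
  -- splitting the product at position k
  have hsplit : ∀ k, k < p → ∀ t,
      recProd (Bf k t) p =
        recProd (fun j => A' (k+1+j)) (p-1-k) * rotMat t * (A' k * recProd (Bf p 0) k) := by
    intro k hk t
    have hpre : recProd (Bf k t) k = recProd (Bf p 0) k := by
      apply recProd_congr
      intro i hi
      rw [hBf, hαf]
      simp only
      rw [if_pos hi, if_pos (show i < p by omega)]
    have key : ∀ m, recProd (Bf k t) (k+1+m) =
        recProd (fun j => A' (k+1+j)) m * rotMat t * (A' k * recProd (Bf p 0) k) := by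
      intro m
      induction m with
      | zero =>
        show recProd (Bf k t) (k+1) = _
        rw [show recProd (Bf k t) (k+1) = Bf k t k * recProd (Bf k t) k from rfl, hpre]
        have hBk : Bf k t k = rotMat t * A' k := by
          rw [hBf, hαf]
          simp only
          simp
        rw [hBk]
        show rotMat t * A' k * recProd (Bf p 0) k = 1 * rotMat t * (A' k * recProd (Bf p 0) k)
        simp only [Matrix.one_mul, Matrix.mul_assoc]
      | succ m ihm =>
        have hstep : k+1+(m+1) = (k+1+m)+1 := by omega
        rw [hstep]
        rw [show recProd (Bf k t) ((k+1+m)+1) = Bf k t (k+1+m) * recProd (Bf k t) (k+1+m)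
          from rfl, ihm]
        have hBn : Bf k t (k+1+m) = A' (k+1+m) := by
          rw [hBf, hαf]
          simp only
          rw [if_neg (by omega), if_neg (by omega), rotMat_zero, Matrix.one_mul]
        rw [hBn]
        rw [show recProd (fun j => A' (k+1+j)) (m+1)
          = A' (k+1+m) * recProd (fun j => A' (k+1+j)) m from rfl]
        simp only [Matrix.mul_assoc]
    have hpk : k+1+(p-1-k) = p := by omega
    have := key (p-1-k)
    rw [hpk] at this
    exact this
  -- αf k ε' = αf (k+1) 0
  have hshift : ∀ k, Bf k ε' = Bf (k+1) 0 := by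
    intro k
    funext n
    rw [hBf, hαf]
    simp only
    congr 1
    by_cases h1 : n < k
    · rw [if_pos h1, if_pos (by omega)]
    · by_cases h2 : n = k
      · subst h2
        rw [if_neg h1, if_pos rfl, if_pos (by omega)]
      · rw [if_neg h1, if_neg h2]
        by_cases h3 : n < k+1
        · omega
        · rw [if_neg h3]
          by_cases h4 : n = k+1
          · rw [if_pos h4]
          · rw [if_neg h4]
  -- the inductive angle gain
  have chain : ∀ k, k ≤ p →
      thetaM (recProd (Bf 0 0) p) + k * ε' ≤ thetaM (recProd (Bf k 0) p) := by
    intro k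
    induction k with
    | zero => intro _; simp
    | succ k ihk =>
      intro hk1
      have hk : k < p := by omega
      have ih := ihk (by omega)
      set C := recProd (fun j => A' (k+1+j)) (p-1-k) with hC
      set D := A' k * recProd (Bf p 0) k with hD
      have hCdet : C.det = 1 := recProd_det (fun i => hA'det (k+1+i)) (p-1-k)
      have hDdet : D.det = 1 := by
        rw [hD, Matrix.det_mul, hA'det, recProd_det (hBdet p 0) k, one_mul]
      have hseg := segmentBC hCdet hDdet hε'pos.le (fun t ht => by
        rw [← hsplit k hk t]
        exact Hell k t ht.1 ht.2)
      rw [← hsplit k hk 0] at hseg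
      have h2 : C * rotMat ε' * D = recProd (Bf (k+1) 0) p := by
        rw [← hshift k]
        exact (hsplit k hk ε').symm
      rw [h2] at hseg
      have : (↑(k+1) : ℝ) * ε' = ↑k * ε' + ε' := by push_cast; ring
      rw [this]
      linarith
  -- contradiction
  have hfinal := chain p le_rfl
  have hb1 := thetaM_mem_BC (recProd (Bf 0 0) p)
  have hb2 := thetaM_mem_BC (recProd (Bf p 0) p)
  have hN : 2 * Real.pi + ε' ≤ (p : ℝ) * ε' := by
    have h1 : (2 * Real.pi / ε' : ℝ) ≤ ⌈2 * Real.pi / ε'⌉₊ := Nat.le_ceil _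
    have h2 : ((⌈2 * Real.pi / ε'⌉₊ : ℕ) : ℝ) + 1 ≤ (p : ℝ) := by
      exact_mod_cast hp
    have h3 : (2 * Real.pi / ε') * ε' = 2 * Real.pi := by
      field_simp
    nlinarith [mul_le_mul_of_nonneg_right h1 hε'pos.le,
      mul_le_mul_of_nonneg_right h2 hε'pos.le]
  have hpi : 0 < Real.pi := Real.pi_pos
  rw [mem_Icc] at hb1 hb2
  linarith
end

section
/- For every real ε > 0 there exists an integer N ≥ 1 such that for every p ≥ N and every sequence A_1, …, A_p of matrices in SL(2,ℝ) whose product A_p·A_{p−1}⋯A_1 has a non-real complex eigenvalue, there exist angles α_1, …, α_p in (−ε, ε) and a time t₀ ∈ (0,1] such that, writing M(t) = (R_{t·α_p}·A_p)·(R_{t·α_{p−1}}·A_{p−1})⋯(R_{t·α_1}·A_1) for t ∈ [0,1]: (i) M(t₀) has only real eigenvalues; (ii) for every t ∈ [0,t₀), M(t) has non-real eigenvalues; and (iii) for every t ∈ [0,t₀], every complex eigenvalue of M(t) has modulus 1. -/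
open Matrix Set

open Polynomial

lemma quad_root_cases (τ : ℝ) (z : ℂ) (h : z^2 - (τ:ℂ)*z + 1 = 0) :
    (2*z.re = τ ∧ z.re^2 + z.im^2 = 1) ∨ (z.im = 0 ∧ z.re^2 - τ*z.re + 1 = 0) := by
  have him : z.im * (2*z.re - τ) = 0 := by
    have := congrArg Complex.im h
    simp [Complex.add_im, Complex.mul_im, pow_two] at this
    nlinarith [this]
  have hre : z.re^2 - z.im^2 - τ*z.re + 1 = 0 := by
    have := congrArg Complex.re h
    simp [Complex.add_re, Complex.mul_re, pow_two] at this
    nlinarith [this]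
  rcases mul_eq_zero.1 him with h0 | h0
  · right; exact ⟨h0, by nlinarith⟩
  · left
    have hτ : τ = 2*z.re := by linarith
    subst hτ
    exact ⟨rfl, by nlinarith⟩

lemma specC_mem_iff {M : Matrix (Fin 2) (Fin 2) ℝ} (hdet : M.det = 1) (z : ℂ) :
    z ∈ specC M ↔ z^2 - ((trace M : ℝ) : ℂ)*z + 1 = 0 := by
  have hch : (M.map (algebraMap ℝ ℂ)).charpoly
      = X^2 - C (((trace M : ℝ) : ℂ)) * X + C 1 := by
    rw [Matrix.charpoly, det_fin_two]
    have ht : trace (M.map (algebraMap ℝ ℂ)) = ((trace M : ℝ) : ℂ) := by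
      simp [trace_fin_two, Matrix.map_apply]
    have hd : det (M.map (algebraMap ℝ ℂ)) = 1 := by
      have h1 : M 0 0 * M 1 1 - M 0 1 * M 1 0 = 1 := by
        rw [← det_fin_two]; exact hdet
      simp [det_fin_two, Matrix.map_apply]
      push_cast
      exact_mod_cast congrArg (fun x : ℝ => (x : ℂ)) h1
    rw [← ht, ← hd]
    simp [charmatrix_apply_eq, charmatrix_apply_ne, trace_fin_two, det_fin_two]
    ring
  have hne : (M.map (algebraMap ℝ ℂ)).charpoly ≠ 0 := by
    rw [hch]
    intro hcon
    have := congrArg (fun p => Polynomial.coeff p 2) hcon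
    simp [Polynomial.coeff_one] at this
  rw [specC, Polynomial.mem_roots hne, hch]
  constructor
  · intro h
    simp [Polynomial.IsRoot] at h
    linear_combination h
  · intro h
    simp [Polynomial.IsRoot]
    linear_combination h

lemma abs_one_of_root {M : Matrix (Fin 2) (Fin 2) ℝ} (hdet : M.det = 1)
    (hτ : (trace M)^2 ≤ 4) : ∀ z ∈ specC M, ‖z‖ = 1 := by
  intro z hz
  rw [specC_mem_iff hdet] at hz
  have h1 : z.re^2 + z.im^2 = 1 := by
    rcases quad_root_cases _ _ hz with ⟨h1, h2⟩ | ⟨h1, h2⟩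
    · exact h2
    · have key : (2*z.re - M.trace)^2 = M.trace^2 - 4 := by linear_combination 4*h2
      have him2 : z.im^2 = 0 := by rw [h1]; ring
      nlinarith [sq_nonneg (2*z.re - M.trace)]
  have : ‖z‖ ^ 2 = 1 := by
    rw [Complex.sq_norm, Complex.normSq_apply]; nlinarith
  nlinarith [norm_nonneg z]

lemma im_zero_of_root {M : Matrix (Fin 2) (Fin 2) ℝ} (hdet : M.det = 1)
    (hτ : (trace M)^2 = 4) : ∀ z ∈ specC M, z.im = 0 := by
  intro z hz
  rw [specC_mem_iff hdet] at hz
  rcases quad_root_cases _ _ hz with ⟨h1, h2⟩ | ⟨h1, h2⟩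
  · have h4 : (2*z.re)^2 = M.trace^2 := by rw [h1]
    have him2 : z.im^2 = 0 := by nlinarith [h4]
    exact pow_eq_zero_iff (by norm_num) |>.1 him2
  · exact h1

lemma exists_nonreal_root {M : Matrix (Fin 2) (Fin 2) ℝ} (hdet : M.det = 1)
    (hτ : (trace M)^2 < 4) : ∃ z ∈ specC M, z.im ≠ 0 := by
  set τ := trace M with hτdef
  have hs : Real.sqrt (4 - τ^2) ^ 2 = 4 - τ^2 := Real.sq_sqrt (by linarith)
  have hspos : 0 < Real.sqrt (4 - τ^2) := Real.sqrt_pos.2 (by linarith)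
  set s := Real.sqrt (4 - τ^2) with hsdef
  refine ⟨(τ/2 : ℝ) + (s/2 : ℝ) * Complex.I, ?_, ?_⟩
  · rw [specC_mem_iff hdet]
    have hsC : ((s : ℂ))^2 = 4 - (τ:ℂ)^2 := by exact_mod_cast congrArg (fun x : ℝ => (x:ℂ)) hs
    push_cast
    linear_combination (Complex.I^2/4) * hsC + ((4 - (τ:ℂ)^2)/4) * Complex.I_sq
  · simp
    exact ne_of_gt hspos

lemma elliptic_of_nonreal {M : Matrix (Fin 2) (Fin 2) ℝ} (hdet : M.det = 1)
    (h : ∃ z ∈ specC M, z.im ≠ 0) : (trace M)^2 < 4 := by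
  obtain ⟨z, hz, him⟩ := h
  rw [specC_mem_iff hdet] at hz
  rcases quad_root_cases _ _ hz with ⟨h1, h2⟩ | ⟨h1, h2⟩
  · have h3 : 0 < z.im^2 := by positivity
    have h4 : (2*z.re)^2 = M.trace^2 := by rw [h1]
    nlinarith [h3, h4]
  · exact absurd h1 him


noncomputable def Jmat : Matrix (Fin 2) (Fin 2) ℝ := !![0,-1;1,0]

lemma trace_Jmat_mul (D : Matrix (Fin 2) (Fin 2) ℝ) :
    trace (Jmat * D) = D 0 1 - D 1 0 := by
  rw [Matrix.eta_fin_two D]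
  simp [Jmat, trace_fin_two, Matrix.mul_apply, Fin.sum_univ_two]
  ring

-- amplitude identity: for det 1 matrices, (D01-D10)^2 ≥ 4 - (tr D)^2
lemma amp_ge (D : Matrix (Fin 2) (Fin 2) ℝ) (hdet : D.det = 1) :
    4 - (trace D)^2 ≤ (D 0 1 - D 1 0)^2 := by
  have h := hdet
  rw [det_fin_two] at h
  rw [trace_fin_two]
  nlinarith [sq_nonneg (D 0 1 + D 1 0), sq_nonneg (D 0 0 - D 1 1)]

lemma posCase (x y z w a b c d : ℝ) (h1 : x*w - y*z = 1) (h2 : a*d - b*c = 1)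
    (h3 : (a+d)^2 < 4) (h4 : 0 < b - c) :
    0 < (x^2+z^2)*b - (y^2+w^2)*c - (x*y+z*w)*(a-d) := by
  have hell : (a-d)^2 < -(4*(b*c)) := by nlinarith
  have hbc : b*c < 0 := by nlinarith [sq_nonneg (a-d)]
  have hb : 0 < b := by nlinarith
  have hc : c < 0 := by nlinarith
  have hlag : (x^2+z^2)*(y^2+w^2) = (x*y+z*w)^2 + 1 := by nlinarith [h1]
  have hP : 0 < x^2+z^2 := by nlinarith [sq_nonneg (x*y+z*w), sq_nonneg y, sq_nonneg w, sq_nonneg x, sq_nonneg z]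
  have hR : 0 < y^2+w^2 := by nlinarith [sq_nonneg (x*y+z*w), sq_nonneg y, sq_nonneg w, sq_nonneg x, sq_nonneg z]
  have key1 : 0 < (x^2+z^2)*b - (y^2+w^2)*c := by nlinarith [mul_pos hP hb, mul_pos hR (neg_pos.2 hc)]
  have key2 : ((x*y+z*w)*(a-d))^2 < ((x^2+z^2)*b - (y^2+w^2)*c)^2 := by
    nlinarith [sq_nonneg ((x^2+z^2)*b + (y^2+w^2)*c), sq_nonneg (x*y+z*w), mul_pos hb (neg_pos.2 hc)]
  nlinarith [key1, key2]

lemma inv_eq_adj {C : Matrix (Fin 2) (Fin 2) ℝ} (hC : C.det = 1) :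
    C⁻¹ = !![C 1 1, -C 0 1; -C 1 0, C 0 0] := by
  rw [Matrix.inv_def, hC, Matrix.adjugate_fin_two]
  simp

lemma trace_J_conj {C M : Matrix (Fin 2) (Fin 2) ℝ} (hC : C.det = 1) :
    trace (Jmat * (C * M * C⁻¹)) =
      (C 0 0^2 + C 1 0^2) * M 0 1 - (C 0 1^2 + C 1 1^2) * M 1 0
        - (C 0 0 * C 0 1 + C 1 0 * C 1 1) * (M 0 0 - M 1 1) := by
  rw [trace_Jmat_mul, inv_eq_adj hC]
  simp [Matrix.mul_apply, Fin.sum_univ_two]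
  ring

lemma sign_conj {C M : Matrix (Fin 2) (Fin 2) ℝ} (hC : C.det = 1) (hM : M.det = 1)
    (hell : (trace M)^2 < 4) :
    0 < (M 0 1 - M 1 0) * trace (Jmat * (C * M * C⁻¹)) := by
  have hdC := hC; rw [det_fin_two] at hdC
  have hdM := hM; rw [det_fin_two] at hdM
  have htr := hell; rw [trace_fin_two] at htr
  rw [trace_J_conj hC]
  have hbc : M 0 1 * M 1 0 < 0 := by nlinarith [sq_nonneg (M 0 0 - M 1 1)]
  rcases lt_or_gt_of_ne (show M 0 1 - M 1 0 ≠ 0 from fun h => absurd ((show M 1 0 = M 0 1 by linarith) ▸ hbc) (not_lt.2 (mul_self_nonneg (M 0 1)))) with hneg | hpos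
  · have := posCase (C 0 0) (-(C 0 1)) (-(C 1 0)) (C 1 1) (M 0 0) (-(M 0 1)) (-(M 1 0)) (M 1 1)
      (by nlinarith) (by nlinarith) (by nlinarith) (by nlinarith)
    nlinarith [this]
  · have := posCase (C 0 0) (C 0 1) (C 1 0) (C 1 1) (M 0 0) (M 0 1) (M 1 0) (M 1 1)
      (by nlinarith) (by nlinarith) (by nlinarith) (by nlinarith)
    nlinarith [this]

noncomputable def pprod (h : ℕ → Matrix (Fin 2) (Fin 2) ℝ) : ℕ → Matrix (Fin 2) (Fin 2) ℝ
  | 0 => 1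
  | k+1 => h k * pprod h k

lemma seqProd'_eq_pprod : ∀ (n : ℕ) (q : Fin n → Matrix (Fin 2) (Fin 2) ℝ)
    (h : ℕ → Matrix (Fin 2) (Fin 2) ℝ), (∀ i : Fin n, q i = h i) →
    seqProd' q = pprod h n := by
  intro n
  induction n with
  | zero => intro q h hq; simp [seqProd', pprod]
  | succ n ih =>
    intro q h hq
    rw [seqProd', List.ofFn_succ', List.concat_eq_append, List.reverse_append]
    simp only [List.reverse_cons, List.reverse_nil, List.nil_append, List.singleton_append,
      List.prod_cons]
    rw [pprod]
    congr 1
    · exact (hq (Fin.last n)).trans (by norm_num)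
    · exact ih (fun i => q i.castSucc) h (fun i => (hq i.castSucc).trans (by simp))

-- the rotated product
noncomputable def Gm (s : ℝ) (f : ℕ → Matrix (Fin 2) (Fin 2) ℝ) (k : ℕ) (u : ℝ) :
    Matrix (Fin 2) (Fin 2) ℝ :=
  pprod (fun j => rotMat (u * s) * f j) k

lemma rotMat_det (α : ℝ) : (rotMat α).det = 1 := by
  simp [rotMat, det_fin_two_of]
  nlinarith [Real.sin_sq_add_cos_sq α]

lemma Gm_det {s : ℝ} {f : ℕ → Matrix (Fin 2) (Fin 2) ℝ} (hf : ∀ j, (f j).det = 1)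
    (k : ℕ) (u : ℝ) : (Gm s f k u).det = 1 := by
  induction k with
  | zero => simp [Gm, pprod]
  | succ k ih =>
    rw [Gm, pprod, det_mul, det_mul, rotMat_det, hf k]
    rw [Gm] at ih
    rw [ih]; ring

noncomputable def Dm (s : ℝ) (f : ℕ → Matrix (Fin 2) (Fin 2) ℝ) (k : ℕ) (u : ℝ) :
    Matrix (Fin 2) (Fin 2) ℝ :=
  s • (∑ i ∈ Finset.range k, Gm s f k u * (Gm s f (i+1) u)⁻¹ * Jmat * Gm s f (i+1) u)

lemma rot_entry_deriv (s u : ℝ) (i j : Fin 2) :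
    HasDerivAt (fun u => rotMat (u * s) i j) ((s • (Jmat * rotMat (u * s))) i j) u := by
  have hc : HasDerivAt (fun u : ℝ => u * s) s u := by
    simpa using (hasDerivAt_id u).mul_const s
  have hcos : HasDerivAt (fun u => Real.cos (u * s)) (-Real.sin (u * s) * s) u :=
    hc.cos
  have hsin : HasDerivAt (fun u => Real.sin (u * s)) (Real.cos (u * s) * s) u :=
    hc.sin
  fin_cases i <;> fin_cases j <;>
    simp [rotMat, Jmat, Matrix.smul_apply, Matrix.mul_apply, Fin.sum_univ_two]
  · convert hcos using 1; ring
  · rw [show -(s * Real.cos (u * s)) = -(Real.cos (u * s) * s) by ring]; exact hsin.fun_neg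
  · convert hsin using 1; ring
  · convert hcos using 1; ring

lemma entry_mul_deriv {X Y : ℝ → Matrix (Fin 2) (Fin 2) ℝ}
    {X' Y' : Matrix (Fin 2) (Fin 2) ℝ} {u : ℝ}
    (hX : ∀ i j, HasDerivAt (fun u => X u i j) (X' i j) u)
    (hY : ∀ i j, HasDerivAt (fun u => Y u i j) (Y' i j) u) :
    ∀ i j, HasDerivAt (fun u => (X u * Y u) i j) ((X' * Y u + X u * Y') i j) u := by
  intro i j
  have h : HasDerivAt (fun u' => ∑ l : Fin 2, X u' i l * Y u' l j)
      (∑ l : Fin 2, (X' i l * Y u l j + X u i l * Y' l j)) u :=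
    HasDerivAt.fun_sum fun l _ => (hX i l).mul (hY l j)
  simp only [Matrix.mul_apply, Matrix.add_apply]
  rw [← Finset.sum_add_distrib]
  exact h

lemma Gm_succ (s : ℝ) (f : ℕ → Matrix (Fin 2) (Fin 2) ℝ) (k : ℕ) (u : ℝ) :
    Gm s f (k+1) u = (rotMat (u * s) * f k) * Gm s f k u := rfl

lemma Dm_succ {s : ℝ} {f : ℕ → Matrix (Fin 2) (Fin 2) ℝ} (hf : ∀ j, (f j).det = 1)
    (k : ℕ) (u : ℝ) :
    Dm s f (k+1) u = s • (Jmat * Gm s f (k+1) u) + (rotMat (u * s) * f k) * Dm s f k u := by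
  have hdet : IsUnit (Gm s f (k+1) u).det := by
    rw [Gm_det hf]; exact isUnit_one
  rw [Dm, Finset.sum_range_succ]
  have h1 : Gm s f (k+1) u * (Gm s f (k+1) u)⁻¹ * Jmat * Gm s f (k+1) u
      = Jmat * Gm s f (k+1) u := by
    rw [Matrix.mul_nonsing_inv _ hdet, Matrix.one_mul]
  rw [h1, smul_add, add_comm]
  congr 1
  rw [Dm, Matrix.mul_smul]
  congr 1
  rw [Finset.mul_sum]
  refine Finset.sum_congr rfl fun i hi => ?_
  rw [Gm_succ]
  simp [Matrix.mul_assoc]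

lemma Gm_entry_hasDeriv {s : ℝ} {f : ℕ → Matrix (Fin 2) (Fin 2) ℝ}
    (hf : ∀ j, (f j).det = 1) (k : ℕ) (u : ℝ) :
    ∀ i j, HasDerivAt (fun u => Gm s f k u i j) (Dm s f k u i j) u := by
  induction k with
  | zero =>
    intro i j
    have h0 : Dm s f 0 u = 0 := by simp [Dm]
    rw [h0]
    have : (fun u : ℝ => Gm s f 0 u i j) = fun _ => (1 : Matrix (Fin 2) (Fin 2) ℝ) i j := by
      funext u'; rfl
    rw [this]
    simpa using hasDerivAt_const u ((1 : Matrix (Fin 2) (Fin 2) ℝ) i j)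
  | succ k ih =>
    intro i j
    have hX : ∀ i j, HasDerivAt (fun u => (rotMat (u * s) * f k) i j)
        ((s • (Jmat * rotMat (u * s)) * f k) i j) u := by
      have := entry_mul_deriv (X := fun u => rotMat (u * s)) (Y := fun _ => f k)
        (X' := s • (Jmat * rotMat (u * s))) (Y' := 0) (u := u)
        (rot_entry_deriv s u) (fun i j => hasDerivAt_const u _)
      intro i' j'
      simpa using this i' j'
    have h := entry_mul_deriv (X := fun u => rotMat (u * s) * f k)
      (Y := fun u => Gm s f k u)
      (X' := s • (Jmat * rotMat (u * s)) * f k) (Y' := Dm s f k u) (u := u) hX ih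
    have hfun : (fun u => Gm s f (k+1) u i j)
        = fun u => ((rotMat (u * s) * f k) * Gm s f k u) i j := by
      funext u'; rw [Gm_succ]
    rw [hfun]
    have hval : (s • (Jmat * rotMat (u * s)) * f k * Gm s f k u
        + (rotMat (u * s) * f k) * Dm s f k u) = Dm s f (k+1) u := by
      rw [Dm_succ hf]
      congr 1
      rw [Gm_succ]
      simp [Matrix.smul_mul, Matrix.mul_assoc]
    rw [← hval]
    exact h i j

lemma det_conj {C M : Matrix (Fin 2) (Fin 2) ℝ} (hC : C.det = 1) (hM : M.det = 1) :
    (C * M * C⁻¹).det = 1 := by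
  rw [det_mul, det_mul, Matrix.det_nonsing_inv, hC, hM]
  simp

lemma trace_conj {C M : Matrix (Fin 2) (Fin 2) ℝ} (hC : C.det = 1) :
    trace (C * M * C⁻¹) = trace M := by
  rw [trace_mul_comm, ← Matrix.mul_assoc, Matrix.nonsing_inv_mul _ (by rw [hC]; exact isUnit_one),
    Matrix.one_mul]

lemma slot_bound {C M : Matrix (Fin 2) (Fin 2) ℝ} (hC : C.det = 1) (hM : M.det = 1)
    (hell : (trace M)^2 < 4) (s : ℝ) (hs : s = 1 ∨ s = -1)
    (hsign : 0 < s * (M 0 1 - M 1 0)) (hconjsign : 0 < (M 0 1 - M 1 0) * trace (Jmat * (C * M * C⁻¹))) :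
    Real.sqrt (4 - (trace M)^2) ≤ s * trace (Jmat * (C * M * C⁻¹)) := by
  set T := trace (Jmat * (C * M * C⁻¹)) with hT
  have hD : 4 - (trace M)^2 ≤ T^2 := by
    have h1 := amp_ge (C * M * C⁻¹) (det_conj hC hM)
    rw [trace_conj hC] at h1
    rw [hT, trace_Jmat_mul]
    exact h1
  have hsT : 0 < s * T := by
    rcases hs with h | h <;> subst h <;>
      nlinarith [mul_pos hsign hconjsign, sq_nonneg (M 0 1 - M 1 0), hsign, hconjsign]
  have h2 : 4 - (trace M)^2 ≤ (s*T)^2 := by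
    rcases hs with h | h <;> subst h <;> nlinarith [hD]
  calc Real.sqrt (4 - (trace M)^2) ≤ Real.sqrt ((s*T)^2) := Real.sqrt_le_sqrt h2
    _ = |s*T| := Real.sqrt_sq_eq_abs _
    _ = s*T := abs_of_pos hsT

lemma Gm_zero (s : ℝ) (f : ℕ → Matrix (Fin 2) (Fin 2) ℝ) (k : ℕ) :
    Gm s f k 0 = pprod f k := by
  induction k with
  | zero => rfl
  | succ k ih =>
    rw [Gm_succ, ih, pprod]
    congr 1
    rw [show (0:ℝ) * s = 0 by ring]
    have : rotMat 0 = 1 := by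
      simp [rotMat]
      ext i j; fin_cases i <;> fin_cases j <;> simp [Matrix.one_apply]
    rw [this, Matrix.one_mul]

lemma Gm_entry_continuous {s : ℝ} {f : ℕ → Matrix (Fin 2) (Fin 2) ℝ}
    (hf : ∀ j, (f j).det = 1) (k : ℕ) (i j : Fin 2) :
    Continuous (fun u => Gm s f k u i j) :=
  continuous_iff_continuousAt.2 fun u => (Gm_entry_hasDeriv hf k u i j).continuousAt

lemma trace_Gm_hasDeriv {s : ℝ} {f : ℕ → Matrix (Fin 2) (Fin 2) ℝ}
    (hf : ∀ j, (f j).det = 1) (k : ℕ) (u : ℝ) :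
    HasDerivAt (fun u => trace (Gm s f k u)) (trace (Dm s f k u)) u := by
  have h := (Gm_entry_hasDeriv (s := s) hf k u 0 0).add (Gm_entry_hasDeriv (s := s) hf k u 1 1)
  have hfun : (fun u => trace (Gm s f k u)) = fun u => Gm s f k u 0 0 + Gm s f k u 1 1 := by
    funext u'; rw [trace_fin_two]
  rw [hfun, trace_fin_two]
  exact h

lemma trace_Dm_eq {s : ℝ} {f : ℕ → Matrix (Fin 2) (Fin 2) ℝ} (k : ℕ) (u : ℝ) :
    trace (Dm s f k u) = s * ∑ i ∈ Finset.range k,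
      trace (Jmat * (Gm s f (i+1) u * Gm s f k u * (Gm s f (i+1) u)⁻¹)) := by
  rw [Dm, Matrix.trace_smul, Matrix.trace_sum, smul_eq_mul]
  congr 1
  refine Finset.sum_congr rfl fun i hi => ?_
  rw [trace_mul_comm]
  rw [show Gm s f (i+1) u * (Gm s f k u * (Gm s f (i+1) u)⁻¹ * Jmat)
      = (Gm s f (i+1) u * Gm s f k u * (Gm s f (i+1) u)⁻¹) * Jmat by
    simp [Matrix.mul_assoc]]
  rw [trace_mul_comm]

lemma exists_ge4 {f : ℕ → Matrix (Fin 2) (Fin 2) ℝ} (hf : ∀ j, (f j).det = 1)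
    {p : ℕ} (hp : 0 < p) (hell : (trace (pprod f p))^2 < 4) :
    ∃ s : ℝ, (s = 1 ∨ s = -1) ∧ ∃ u ∈ Ioc (0:ℝ) (Real.pi / p),
      4 ≤ (trace (Gm s f p u))^2 := by
  classical
  set B := pprod f p with hB
  set β₀ : ℝ := B 0 1 - B 1 0 with hβ₀
  have hdetB : B.det = 1 := by rw [hB, ← Gm_zero 1 f p]; exact Gm_det hf p 0
  have hβ₀ne : β₀ ≠ 0 := by
    intro h
    have := amp_ge B hdetB
    rw [← hβ₀] at this
    rw [h] at this
    nlinarith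
  set s : ℝ := if 0 < β₀ then 1 else -1 with hs
  have hschoice : s = 1 ∨ s = -1 := by
    by_cases h : 0 < β₀ <;> simp [hs, h]
  have hsβ₀ : 0 < s * β₀ := by
    rcases lt_trichotomy β₀ 0 with hneg | hzero | hpos
    · have hh : s = -1 := by simp [hs, not_lt.2 hneg.le]
      rw [hh]; linarith
    · exact absurd hzero hβ₀ne
    · have hh : s = 1 := by simp [hs, hpos]
      rw [hh]; linarith
  refine ⟨s, hschoice, ?_⟩
  by_contra hcon
  push_neg at hcon
  have hπp : 0 < Real.pi / p := by positivity
  -- ellipticity on the whole closed interval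
  have H : ∀ u ∈ Icc (0:ℝ) (Real.pi / p), (trace (Gm s f p u))^2 < 4 := by
    intro u hu
    rcases eq_or_lt_of_le hu.1 with h0 | h0
    · rw [← h0, Gm_zero]; exact hell
    · exact hcon u ⟨h0, hu.2⟩
  -- sign constancy
  set β : ℝ → ℝ := fun u => Gm s f p u 0 1 - Gm s f p u 1 0 with hβ
  have hβcont : Continuous β :=
    (Gm_entry_continuous hf p 0 1).sub (Gm_entry_continuous hf p 1 0)
  have hβne : ∀ u ∈ Icc (0:ℝ) (Real.pi / p), β u ≠ 0 := by
    intro u hu h0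
    have := amp_ge (Gm s f p u) (Gm_det hf p u)
    rw [show Gm s f p u 0 1 - Gm s f p u 1 0 = β u from rfl, h0] at this
    nlinarith [H u hu]
  have hβ0 : β 0 = β₀ := by rw [hβ]; simp [Gm_zero, ← hB, ← hβ₀]
  have hsign : ∀ u ∈ Icc (0:ℝ) (Real.pi / p), 0 < s * β u := by
    intro u hu
    by_contra hle
    push_neg at hle
    have hg : ContinuousOn (fun v => s * β v) (Icc 0 u) :=
      (continuous_const.mul hβcont).continuousOn
    have h00 : (0:ℝ) ∈ Icc (s * β u) (s * β 0) := by
      constructor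
      · exact hle
      · rw [hβ0]; exact le_of_lt hsβ₀
    obtain ⟨c, hc, hc0⟩ := intermediate_value_Icc' hu.1 hg h00
    have hcmem : c ∈ Icc (0:ℝ) (Real.pi / p) := ⟨hc.1, le_trans hc.2 hu.2⟩
    have hc0' : s * β c = 0 := hc0
    have hβc : β c = 0 := by
      rcases hschoice with h | h <;> rw [h] at hc0' <;> linarith
    exact hβne c hcmem hβc
  -- derivative lower bound
  have hDbound : ∀ u ∈ Icc (0:ℝ) (Real.pi / p),
      (p : ℝ) * Real.sqrt (4 - (trace (Gm s f p u))^2) ≤ trace (Dm s f p u) := by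
    intro u hu
    rw [trace_Dm_eq]
    have hterm : ∀ i ∈ Finset.range p,
        Real.sqrt (4 - (trace (Gm s f p u))^2)
          ≤ s * trace (Jmat * (Gm s f (i+1) u * Gm s f p u * (Gm s f (i+1) u)⁻¹)) := by
      intro i hi
      refine slot_bound (Gm_det hf (i+1) u) (Gm_det hf p u) (H u hu) s hschoice
        (hsign u hu) ?_
      exact sign_conj (Gm_det hf (i+1) u) (Gm_det hf p u) (H u hu)
    calc (p : ℝ) * Real.sqrt (4 - (trace (Gm s f p u))^2)
        = ∑ i ∈ Finset.range p, Real.sqrt (4 - (trace (Gm s f p u))^2) := by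
          rw [Finset.sum_const, Finset.card_range]; ring
      _ ≤ ∑ i ∈ Finset.range p, s * trace (Jmat * (Gm s f (i+1) u * Gm s f p u * (Gm s f (i+1) u)⁻¹)) :=
          Finset.sum_le_sum hterm
      _ = s * ∑ i ∈ Finset.range p, trace (Jmat * (Gm s f (i+1) u * Gm s f p u * (Gm s f (i+1) u)⁻¹)) := by
          rw [Finset.mul_sum]
  -- the comparison function θ
  set τ : ℝ → ℝ := fun u => trace (Gm s f p u) with hτ
  set θ : ℝ → ℝ := fun u => Real.arcsin (τ u / 2) with hθ
  have hτcont : Continuous τ := by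
    have : τ = fun u => Gm s f p u 0 0 + Gm s f p u 1 1 := by
      funext u; exact trace_fin_two _
    rw [this]
    exact (Gm_entry_continuous hf p 0 0).add (Gm_entry_continuous hf p 1 1)
  have hθderiv : ∀ u ∈ Ioo (0:ℝ) (Real.pi / p),
      HasDerivAt θ (trace (Dm s f p u) / Real.sqrt (4 - (τ u)^2)) u := by
    intro u hu
    have humem : u ∈ Icc (0:ℝ) (Real.pi / p) := ⟨hu.1.le, hu.2.le⟩
    have hell' : (τ u)^2 < 4 := H u humem
    have h1 : τ u / 2 ≠ -1 := by intro h; nlinarith [h, sq_nonneg (τ u)]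
    have h2 : τ u / 2 ≠ 1 := by intro h; nlinarith [h, sq_nonneg (τ u)]
    have harcsin := Real.hasDerivAt_arcsin h1 h2
    have hτd : HasDerivAt (fun u => τ u / 2) (trace (Dm s f p u) / 2) u :=
      (trace_Gm_hasDeriv (s := s) hf p u).div_const 2
    have hcomp := harcsin.comp u hτd
    have hsqrt : Real.sqrt (1 - (τ u / 2)^2) = Real.sqrt (4 - (τ u)^2) / 2 := by
      rw [show (1 - (τ u / 2)^2) = (4 - (τ u)^2) * (1/2)^2 by ring,
        Real.sqrt_mul (by nlinarith [hell']), Real.sqrt_sq (by norm_num : (0:ℝ) ≤ 1/2)]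
      ring
    have : (1 / Real.sqrt (1 - (τ u / 2)^2)) * (trace (Dm s f p u) / 2)
        = trace (Dm s f p u) / Real.sqrt (4 - (τ u)^2) := by
      rw [hsqrt]
      have : Real.sqrt (4 - (τ u)^2) > 0 := Real.sqrt_pos.2 (by nlinarith [hell'])
      field_simp
    rw [← this]
    exact hcomp
  have hθcont : ContinuousOn θ (Icc 0 (Real.pi / p)) :=
    (Real.continuous_arcsin.comp (hτcont.div_const 2)).continuousOn
  obtain ⟨c, hc, hslope⟩ := exists_hasDerivAt_eq_slope θ
    (fun u => trace (Dm s f p u) / Real.sqrt (4 - (τ u)^2)) hπp hθcont hθderiv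
  have hcmem : c ∈ Icc (0:ℝ) (Real.pi / p) := ⟨hc.1.le, hc.2.le⟩
  have hellc : (τ c)^2 < 4 := H c hcmem
  have hsqrtc : 0 < Real.sqrt (4 - (τ c)^2) := Real.sqrt_pos.2 (by nlinarith)
  have hbig : (p : ℝ) ≤ trace (Dm s f p c) / Real.sqrt (4 - (τ c)^2) := by
    rw [le_div_iff₀ hsqrtc]
    exact hDbound c hcmem
  rw [hslope] at hbig
  -- θ(π/p) - θ(0) ≥ π
  have hθub : θ (Real.pi / p) < Real.pi / 2 := by
    have := H (Real.pi / p) ⟨le_of_lt hπp, le_refl _⟩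
    exact Real.arcsin_lt_pi_div_two.2 (by nlinarith)
  have hθlb : -(Real.pi / 2) < θ 0 := by
    have := H 0 ⟨le_refl _, le_of_lt hπp⟩
    exact Real.neg_pi_div_two_lt_arcsin.2 (by nlinarith)
  have hpne : (p:ℝ) ≠ 0 := Nat.cast_ne_zero.2 (Nat.pos_iff_ne_zero.1 hp)
  have : Real.pi ≤ θ (Real.pi / p) - θ 0 := by
    have h1 : (p : ℝ) ≤ (θ (Real.pi / p) - θ 0) / (Real.pi / p - 0) := hbig
    rw [sub_zero] at h1
    have := (le_div_iff₀ hπp).1 h1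
    calc Real.pi = (p:ℝ) * (Real.pi / p) := by field_simp
      _ ≤ θ (Real.pi / p) - θ 0 := this
  linarith [Real.pi_pos]


theorem rotations_path_to_real_eigenvalues :
    ∀ ε : ℝ, 0 < ε → ∃ N : ℕ, 1 ≤ N ∧ ∀ p : ℕ, N ≤ p →
      ∀ A : Fin p → Matrix.SpecialLinearGroup (Fin 2) ℝ,
      -- the product has a non-real eigenvalue
      (∃ z ∈ specC (seqProd' (fun i => (A i : Matrix (Fin 2) (Fin 2) ℝ))), z.im ≠ 0) →
      ∃ α : Fin p → ℝ, ∃ t₀ : ℝ, t₀ ∈ Ioc (0:ℝ) 1 ∧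
        (∀ i, α i ∈ Ioo (-ε) ε) ∧
        -- (i) at time `t₀` all eigenvalues of the product are real
        (∀ z ∈ specC (seqProd'
            (fun i => rotMat (t₀ * α i) * (A i : Matrix (Fin 2) (Fin 2) ℝ))), z.im = 0) ∧
        -- (ii) for `t < t₀` the product has non-real eigenvalues
        (∀ t ∈ Ico (0:ℝ) t₀,
          ∃ z ∈ specC (seqProd'
            (fun i => rotMat (t * α i) * (A i : Matrix (Fin 2) (Fin 2) ℝ))), z.im ≠ 0) ∧
        -- (iii) for `t ∈ [0, t₀]` every eigenvalue of the product has modulus 1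
        (∀ t ∈ Icc (0:ℝ) t₀,
          ∀ z ∈ specC (seqProd'
            (fun i => rotMat (t * α i) * (A i : Matrix (Fin 2) (Fin 2) ℝ))),
          ‖z‖ = 1) := by
  intro ε hε
  refine ⟨⌈Real.pi / ε⌉₊ + 1, by omega, ?_⟩
  intro p hp A hyp
  classical
  have hppos : 0 < p := by
    have : 0 < ⌈Real.pi / ε⌉₊ + 1 := by omega
    omega
  set f : ℕ → Matrix (Fin 2) (Fin 2) ℝ :=
    fun k => if h : k < p then (A ⟨k, h⟩ : Matrix (Fin 2) (Fin 2) ℝ) else 1 with hfdef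
  have hf : ∀ j, (f j).det = 1 := by
    intro j
    by_cases h : j < p
    · simp [hfdef, h]
    · simp [hfdef, h]
  have hBeq : seqProd' (fun i => (A i : Matrix (Fin 2) (Fin 2) ℝ)) = pprod f p :=
    seqProd'_eq_pprod p _ f (fun i => by simp [hfdef, i.isLt])
  have hdetB : (pprod f p).det = 1 := by
    rw [← Gm_zero 1 f p]; exact Gm_det hf p 0
  have hell : (trace (pprod f p))^2 < 4 := by
    apply elliptic_of_nonreal hdetB
    rw [← hBeq]
    exact hyp
  obtain ⟨s, hschoice, u, hu, hu4⟩ := exists_ge4 hf hppos hell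
  set u₁ : ℝ := Real.pi / p with hu₁
  have hu₁pos : 0 < u₁ := by positivity
  have hu₁ε : u₁ < ε := by
    have h1 : Real.pi / ε ≤ (⌈Real.pi / ε⌉₊ : ℝ) := Nat.le_ceil _
    have h2 : ((⌈Real.pi / ε⌉₊ : ℕ) : ℝ) < p := by
      have : ⌈Real.pi / ε⌉₊ < p := by omega
      exact_mod_cast this
    have hppos' : (0:ℝ) < p := by exact_mod_cast hppos
    rw [hu₁, div_lt_iff₀ hppos']
    have : Real.pi / ε < (p : ℝ) := lt_of_le_of_lt h1 h2
    calc Real.pi = (Real.pi / ε) * ε := by field_simp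
      _ < (p:ℝ) * ε := by exact mul_lt_mul_of_pos_right this hε
      _ = ε * p := by ring
  set α : Fin p → ℝ := fun _ => s * u₁ with hα
  have hαmem : ∀ i, α i ∈ Ioo (-ε) ε := by
    intro i
    rcases hschoice with h | h <;> rw [hα] <;> simp [h] <;> constructor <;> linarith
  -- the path in t
  have hM : ∀ t : ℝ, seqProd' (fun i => rotMat (t * α i) * (A i : Matrix (Fin 2) (Fin 2) ℝ))
      = Gm s f p (t * u₁) := by
    intro t
    refine seqProd'_eq_pprod p _ _ (fun i => ?_)
    rw [hα]
    simp only [hfdef, i.isLt, dif_pos]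
    congr 1
    · congr 1; ring
  set τ : ℝ → ℝ := fun t => trace (Gm s f p (t * u₁)) with hτ
  have hτ0 : (τ 0)^2 < 4 := by
    rw [hτ]; simp only [zero_mul, Gm_zero]; exact hell
  have hτcont : Continuous τ := by
    have h1 : Continuous (fun v => trace (Gm s f p v)) := by
      have : (fun v => trace (Gm s f p v)) = fun v => Gm s f p v 0 0 + Gm s f p v 1 1 := by
        funext v; exact trace_fin_two _
      rw [this]
      exact (Gm_entry_continuous hf p 0 0).add (Gm_entry_continuous hf p 1 1)
    exact h1.comp (continuous_id.mul continuous_const)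
  set S : Set ℝ := {t | t ∈ Icc (0:ℝ) 1 ∧ 4 ≤ (τ t)^2} with hS
  have htstar : u / u₁ ∈ S := by
    constructor
    · constructor
      · exact div_nonneg hu.1.le hu₁pos.le
      · rw [div_le_one hu₁pos]; exact hu.2
    · show 4 ≤ (trace (Gm s f p (u / u₁ * u₁)))^2
      rw [div_mul_cancel₀ _ (ne_of_gt hu₁pos)]
      exact hu4
  have hSne : S.Nonempty := ⟨u / u₁, htstar⟩
  have hSbdd : BddBelow S := ⟨0, fun t ht => ht.1.1⟩
  have hSclosed : IsClosed S := by
    have h1 : IsClosed {t : ℝ | t ∈ Icc (0:ℝ) 1} := isClosed_Icc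
    have h2 : IsClosed {t : ℝ | 4 ≤ (τ t)^2} :=
      isClosed_le continuous_const ((hτcont.pow 2))
    exact h1.inter h2
  set t₀ : ℝ := sInf S with ht₀
  have ht₀mem : t₀ ∈ S := hSclosed.csInf_mem hSne hSbdd
  have ht₀le : ∀ t ∈ S, t₀ ≤ t := fun t ht => csInf_le hSbdd ht
  have ht₀Icc : t₀ ∈ Icc (0:ℝ) 1 := ht₀mem.1
  have ht₀4 : 4 ≤ (τ t₀)^2 := ht₀mem.2
  have ht₀pos : 0 < t₀ := by
    rcases lt_or_eq_of_le ht₀Icc.1 with h | h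
    · exact h
    · exfalso; rw [← h] at ht₀4; linarith [hτ0]
  have hlt : ∀ t ∈ Ico (0:ℝ) t₀, (τ t)^2 < 4 := by
    intro t ht
    by_contra hge
    push_neg at hge
    have : t ∈ S := ⟨⟨ht.1, le_trans ht.2.le ht₀Icc.2⟩, hge⟩
    linarith [ht₀le t this, ht.2]
  have hτt₀ : (τ t₀)^2 = 4 := by
    by_contra hne
    have h4 : 4 < (τ t₀)^2 := lt_of_le_of_ne ht₀4 (Ne.symm hne)
    have hcont : ContinuousAt (fun t => (τ t)^2) t₀ := ((hτcont.pow 2)).continuousAt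
    have hev : ∀ᶠ t in nhds t₀, 4 < (τ t)^2 := hcont.eventually (eventually_gt_nhds h4)
    rw [Metric.eventually_nhds_iff] at hev
    obtain ⟨δ, hδ, hball⟩ := hev
    set t' : ℝ := max 0 (t₀ - δ/2) with ht'
    have ht'lt : t' < t₀ := by
      rw [ht']; apply max_lt ht₀pos; linarith
    have ht'0 : 0 ≤ t' := le_max_left _ _
    have hdist : dist t' t₀ < δ := by
      rw [Real.dist_eq, abs_lt]
      constructor
      · have : t₀ - δ/2 ≤ t' := le_max_right _ _
        linarith
      · linarith
    have := hball hdist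
    have := hlt t' ⟨ht'0, ht'lt⟩
    linarith
  -- conclusion
  refine ⟨α, t₀, ⟨ht₀pos, ht₀Icc.2⟩, hαmem, ?_, ?_, ?_⟩
  · intro z hz
    rw [hM t₀] at hz
    exact im_zero_of_root (Gm_det hf p _) hτt₀ z hz
  · intro t ht
    rw [hM t]
    exact exists_nonreal_root (Gm_det hf p _) (hlt t ht)
  · intro t ht z hz
    rw [hM t] at hz
    have hle : (τ t)^2 ≤ 4 := by
      rcases lt_or_eq_of_le ht.2 with h | h
      · exact le_of_lt (hlt t ⟨ht.1, h⟩)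
      · rw [h]; exact le_of_eq hτt₀
    exact abs_one_of_root (Gm_det hf p _) hle z hz
end
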